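/- For every integer n ≥ 5, the triple (x₁, x₁₂, x₁₃, x₂₃) = ((n−4)(n−1)²/(n³−2n²+n−4), (n−1)(n²−3n+4)/(n³−2n²+n−4), (n−1)(n²−3n+4)/(n³−2n²+n−4), 1) is a solution of the system g₁ = g₂ = g₃ = 0, where g₁ = n x₁²x₁₃² − 2n x₁x₁₂x₁₃² + n x₁₂²x₁₃² + x₁²x₁₂² − 2x₁²x₁₃² − x₁x₁₂³x₁₃ + x₁x₁₂x₁₃³ + 4x₁x₁₂x₁₃² + x₁x₁₂x₁₃ − 4x₁₂²x₁₃², g₂ = −n x₁x₁₃ + n x₁₂³ − 2n x₁₂²x₁₃ + n x₁₂x₁₃² + 2n x₁₂x₁₃ − n x₁₂ + 3x₁x₁₃ − x₁₂³ + 4x₁₂²x₁₃ − 3x₁₂x₁₃² − 4x₁₂x₁₃ + x₁₂, g₃ = n x₁x₁₂ − n x₁₂²x₁₃ + 2n x₁₂x₁₃² − 2n x₁₂x₁₃ − n x₁₃³ + n x₁₃ − 3x₁x₁₂ + 3x₁₂²x₁₃ − 4x₁₂x₁₃² + 4x₁₂x₁₃ + x₁₃³ − x₁₃. -/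
import Mathlib


/-- The polynomials `g₁, g₂, g₃` of the normalized system (with `x₂₃ = 1`). -/
def g₁ (n x₁ x₁₂ x₁₃ : ℝ) : ℝ :=
  n * x₁ ^ 2 * x₁₃ ^ 2 - 2 * n * x₁ * x₁₂ * x₁₃ ^ 2 + n * x₁₂ ^ 2 * x₁₃ ^ 2
    + x₁ ^ 2 * x₁₂ ^ 2 - 2 * x₁ ^ 2 * x₁₃ ^ 2 - x₁ * x₁₂ ^ 3 * x₁₃
    + x₁ * x₁₂ * x₁₃ ^ 3 + 4 * x₁ * x₁₂ * x₁₃ ^ 2 + x₁ * x₁₂ * x₁₃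
    - 4 * x₁₂ ^ 2 * x₁₃ ^ 2

def g₂ (n x₁ x₁₂ x₁₃ : ℝ) : ℝ :=
  -n * x₁ * x₁₃ + n * x₁₂ ^ 3 - 2 * n * x₁₂ ^ 2 * x₁₃ + n * x₁₂ * x₁₃ ^ 2
    + 2 * n * x₁₂ * x₁₃ - n * x₁₂ + 3 * x₁ * x₁₃ - x₁₂ ^ 3
    + 4 * x₁₂ ^ 2 * x₁₃ - 3 * x₁₂ * x₁₃ ^ 2 - 4 * x₁₂ * x₁₃ + x₁₂

def g₃ (n x₁ x₁₂ x₁₃ : ℝ) : ℝ :=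
  n * x₁ * x₁₂ - n * x₁₂ ^ 2 * x₁₃ + 2 * n * x₁₂ * x₁₃ ^ 2 - 2 * n * x₁₂ * x₁₃
    - n * x₁₃ ^ 3 + n * x₁₃ - 3 * x₁ * x₁₂ + 3 * x₁₂ ^ 2 * x₁₃
    - 4 * x₁₂ * x₁₃ ^ 2 + 4 * x₁₂ * x₁₃ + x₁₃ ^ 3 - x₁₃

set_option maxHeartbeats 2000000 in
theorem rational_solution_of_system (n : ℤ) (hn : 5 ≤ n) :
    0 < (n : ℝ) ^ 3 - 2 * (n : ℝ) ^ 2 + (n : ℝ) - 4 ∧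
    g₁ (n : ℝ) (((n : ℝ) - 4) * ((n : ℝ) - 1) ^ 2 / ((n : ℝ) ^ 3 - 2 * (n : ℝ) ^ 2 + (n : ℝ) - 4))
        (((n : ℝ) - 1) * ((n : ℝ) ^ 2 - 3 * (n : ℝ) + 4) / ((n : ℝ) ^ 3 - 2 * (n : ℝ) ^ 2 + (n : ℝ) - 4))
        (((n : ℝ) - 1) * ((n : ℝ) ^ 2 - 3 * (n : ℝ) + 4) / ((n : ℝ) ^ 3 - 2 * (n : ℝ) ^ 2 + (n : ℝ) - 4)) = 0 ∧
    g₂ (n : ℝ) (((n : ℝ) - 4) * ((n : ℝ) - 1) ^ 2 / ((n : ℝ) ^ 3 - 2 * (n : ℝ) ^ 2 + (n : ℝ) - 4))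
        (((n : ℝ) - 1) * ((n : ℝ) ^ 2 - 3 * (n : ℝ) + 4) / ((n : ℝ) ^ 3 - 2 * (n : ℝ) ^ 2 + (n : ℝ) - 4))
        (((n : ℝ) - 1) * ((n : ℝ) ^ 2 - 3 * (n : ℝ) + 4) / ((n : ℝ) ^ 3 - 2 * (n : ℝ) ^ 2 + (n : ℝ) - 4)) = 0 ∧
    g₃ (n : ℝ) (((n : ℝ) - 4) * ((n : ℝ) - 1) ^ 2 / ((n : ℝ) ^ 3 - 2 * (n : ℝ) ^ 2 + (n : ℝ) - 4))
        (((n : ℝ) - 1) * ((n : ℝ) ^ 2 - 3 * (n : ℝ) + 4) / ((n : ℝ) ^ 3 - 2 * (n : ℝ) ^ 2 + (n : ℝ) - 4))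
        (((n : ℝ) - 1) * ((n : ℝ) ^ 2 - 3 * (n : ℝ) + 4) / ((n : ℝ) ^ 3 - 2 * (n : ℝ) ^ 2 + (n : ℝ) - 4)) = 0 := by

  have hn' : (5:ℝ) ≤ (n:ℝ) := by exact_mod_cast hn
  have hD : 0 < (n : ℝ) ^ 3 - 2 * (n : ℝ) ^ 2 + (n : ℝ) - 4 := by nlinarith
  have hD' : (n : ℝ) ^ 3 - 2 * (n : ℝ) ^ 2 + (n : ℝ) - 4 ≠ 0 := ne_of_gt hD
  refine ⟨hD, ?_, ?_, ?_⟩ <;> simp only [g₁, g₂, g₃] <;> field_simp <;> ring
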